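/- Let F be a finite field of cardinality p^ℓ with ℓ even, gcd(n, p) = 1, and R = F[X]/⟨Xⁿ − 1⟩ with the Hermitian involution * given by (Σaᵢxⁱ)* = Σaᵢ^{p^{ℓ/2}}x^{−i}. Suppose e is a primitive idempotent of R with e* ≠ e, and set ê = e + e*. Then for z = z' + z'' ∈ Re ⊕ Re* (z' ∈ Re, z'' ∈ Re*), one has z·z* = −ê if and only if z' is a unit of the field Re and z'' = −((z')*)^{−1}; consequently the number of z ∈ Rê with z·z* = −ê equals p^{dℓ} − 1 where d = dim_F Re. -/

import Mathlib

open Polynomial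

set_option synthInstance.maxHeartbeats 1000000
set_option maxHeartbeats 1000000


lemma aux_exists_pow_idem {M : Type*} [CommMonoid M] [Finite M] (x : M) :
    ∃ m, 1 ≤ m ∧ x ^ m * x ^ m = x ^ m := by
  have : ¬ Function.Injective (fun k : ℕ => x ^ k) := fun h =>
    absurd h (not_injective_infinite_finite _)
  rw [Function.not_injective_iff] at this
  obtain ⟨i, j, hij, hne⟩ := this
  wlog hlt : i < j generalizing i j
  · exact this j i hij.symm hne.symm (by omega)
  set r := j - i with hr
  have hr1 : 1 ≤ r := by omega
  have hstep : x ^ (i + r) = x ^ i := by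
    have : i + r = j := by omega
    rw [this]; exact hij.symm
  have key : ∀ t s, x ^ (i + s + t * r) = x ^ (i + s) := by
    intro t
    induction t with
    | zero => simp
    | succ t ih =>
      intro s
      have h1 : i + s + (t + 1) * r = (i + (s + r)) + t * r := by ring
      rw [h1, ih (s + r), show i + (s + r) = (i + r) + s by ring, pow_add, hstep, ← pow_add]
  refine ⟨r * (i + 1), by nlinarith, ?_⟩
  rw [← pow_add]
  have h2 : r * (i + 1) + r * (i + 1) = i + (r * (i + 1) - i) + (i + 1) * r := by
    have : i ≤ r * (i + 1) := by nlinarith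
    have : (i+1) * r = r * (i+1) := by ring
    omega
  have h3 : r * (i + 1) = i + (r * (i + 1) - i) := by nlinarith
  rw [h2, key, ← h3]

/-- The quotient ring `R_λ = F[X]/⟨Xⁿ − λ⟩` (here used with `λ = 1`). -/
abbrev Rlam (F : Type*) [Field F] (n : ℕ) (lam : F) :=
  F[X] ⧸ Ideal.span {(X : F[X]) ^ n - C lam}

theorem stmt_16 {F : Type*} [Field F] [Fintype F] {p ℓ n : ℕ}
    (hp : p.Prime) (hl : Even ℓ) (hcard : Fintype.card F = p ^ ℓ)
    (hn : Nat.gcd n p = 1)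
    (σ : Rlam F n 1 → Rlam F n 1)
    (hσ : ∀ f : F[X],
      σ (Ideal.Quotient.mk _ f) =
        Ideal.Quotient.mk _
          (f.sum fun i a => C (a ^ p ^ (ℓ / 2)) * X ^ ((n - 1) * i)))
    (e : Rlam F n 1) (he : e * e = e) (he0 : e ≠ 0)
    (hprim : ∀ e₁ e₂ : Rlam F n 1, e₁ * e₁ = e₁ → e₂ * e₂ = e₂ → e₁ * e₂ = 0 →
      e = e₁ + e₂ → e₁ = 0 ∨ e₂ = 0)
    (hne : σ e ≠ e) :
    (∀ z' ∈ Ideal.span {e}, ∀ z'' ∈ Ideal.span {σ e},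
      ((z' + z'') * σ (z' + z'') = -(e + σ e) ↔
        (∃ w ∈ Ideal.span {e}, z' * w = e) ∧
        (∃ w ∈ Ideal.span {σ e}, σ z' * w = σ e ∧ z'' = -w))) ∧
    {z : Rlam F n 1 | z ∈ Ideal.span {e + σ e} ∧ z * σ z = -(e + σ e)}.ncard =
      p ^ (Module.finrank F
        (Submodule.restrictScalars F (Ideal.span {e} : Ideal (Rlam F n 1))) * ℓ) - 1 := by
  classical
  set I : Ideal F[X] := Ideal.span {(X : F[X]) ^ n - C 1} with hI
  set mkq : F[X] →+* Rlam F n 1 := Ideal.Quotient.mk I with hmkq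
  -- basic numerology
  have hn0 : n ≠ 0 := by
    rintro rfl
    simp [Nat.gcd] at hn
    exact hp.one_lt.ne' hn
  have hl0 : ℓ ≠ 0 := by
    rintro rfl
    have h1 := Fintype.one_lt_card (α := F)
    rw [hcard, pow_zero] at h1
    omega
  -- characteristic
  haveI hcharF : CharP F p := by
    haveI : CharP F (ringChar F) := ringChar.charP F
    obtain ⟨m, hprime, hcardm⟩ := FiniteField.card F (ringChar F)
    have hdvd : ringChar F ∣ p ^ ℓ := by
      rw [← hcard, hcardm]; exact dvd_pow_self _ (by exact_mod_cast m.pos.ne')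
    have := (Nat.Prime.dvd_of_dvd_pow hprime hdvd)
    have hpq : ringChar F = p := ((Nat.prime_dvd_prime_iff_eq hprime hp).mp this)
    rwa [hpq] at ‹CharP F (ringChar F)›
  haveI : Fact p.Prime := ⟨hp⟩
  haveI : ExpChar F p := ExpChar.prime hp
  set q : ℕ := p ^ (ℓ / 2) with hq
  set ψ : F →+* F := iterateFrobenius F p (ℓ / 2) with hψ
  have hψdef : ∀ a : F, ψ a = a ^ q := fun a => iterateFrobenius_def (R := F) (p := p) (n := ℓ/2) (x := a)
  set u : Rlam F n 1 := mkq X with hu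
  have hun : u ^ n = 1 := by
    have hmem : (X : F[X]) ^ n - C 1 ∈ I := Ideal.subset_span rfl
    have : mkq ((X : F[X]) ^ n - C 1) = 0 := Ideal.Quotient.eq_zero_iff_mem.mpr hmem
    have h2 : mkq (X ^ n) - mkq (C 1) = 0 := by rw [← map_sub]; exact this
    have : mkq (X ^ n) = mkq (C 1) := by linear_combination h2
    simpa using this
  -- the ring hom Φ on polynomials
  set g : F →+* Rlam F n 1 := mkq.comp (C.comp ψ) with hg
  set Φ : F[X] →+* Rlam F n 1 := eval₂RingHom g (u ^ (n - 1)) with hΦ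
  have hΦC : ∀ a : F, Φ (C a) = mkq (C (a ^ q)) := by
    intro a; simp [hΦ, hg, hψdef a, coe_eval₂RingHom, eval₂_C]
  have hΦX : Φ X = u ^ (n - 1) := by simp [hΦ, coe_eval₂RingHom]
  -- σ agrees with Φ composed with mkq
  have hσΦ : ∀ f : F[X], σ (mkq f) = Φ f := by
    intro f
    rw [hσ f]
    rw [hΦ, coe_eval₂RingHom, eval₂_eq_sum, Polynomial.sum_def, Polynomial.sum_def, map_sum]
    refine Finset.sum_congr rfl fun i _ => ?_
    rw [map_mul, ← map_pow, ← map_pow]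
    simp only [hg, RingHom.comp_apply, hψdef]
    rw [← pow_mul]
  -- Φ kills the ideal
  have hupow : ∀ m : ℕ, u ^ (m * n) = 1 := fun m => by
    rw [mul_comm, pow_mul, hun, one_pow]
  have hΦker : ∀ f ∈ I, Φ f = 0 := by
    intro f hf
    rw [hI, Ideal.mem_span_singleton] at hf
    obtain ⟨c, rfl⟩ := hf
    rw [map_mul]
    have : Φ ((X : F[X]) ^ n - C 1) = 0 := by
      rw [map_sub, map_pow, hΦX, hΦC, ← pow_mul, hupow, one_pow]
      simp
    rw [this, zero_mul]
  -- the lifted ring hom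
  set φ : Rlam F n 1 →+* Rlam F n 1 := Ideal.Quotient.lift I Φ hΦker with hφ
  have hσφ : ∀ x, σ x = φ x := by
    intro x
    obtain ⟨f, rfl⟩ := Ideal.Quotient.mk_surjective x
    rw [show (Ideal.Quotient.mk I) f = mkq f from rfl, hσΦ, hφ, Ideal.Quotient.lift_mk]
  have hσmul : ∀ x y, σ (x * y) = σ x * σ y := by
    intro x y; rw [hσφ, hσφ, hσφ, map_mul]
  have hσadd : ∀ x y, σ (x + y) = σ x + σ y := by
    intro x y; rw [hσφ, hσφ, hσφ, map_add]
  have hσneg : ∀ x, σ (-x) = - σ x := by intro x; rw [hσφ, hσφ, map_neg]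
  have hσpow : ∀ (x) (m : ℕ), σ (x ^ m) = σ x ^ m := by
    intro x m; rw [hσφ, hσφ, map_pow]
  -- involution
  have huinv : u ^ ((n-1) * (n-1)) = u := by
    have harith : (n-1) * (n-1) + 2 * n = n * n + 1 := by
      cases n with
      | zero => exact absurd rfl hn0
      | succ m => simp [Nat.succ_sub_one]; ring
    have h1 : u ^ ((n-1)*(n-1)) * u ^ (2 * n) = u ^ (n * n) * u := by
      rw [← pow_add, harith, pow_succ]
    rwa [hupow 2, mul_one, hupow n, one_mul] at h1
  have hσσ : ∀ x, σ (σ x) = x := by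
    have : φ.comp φ = RingHom.id _ := by
      refine Ideal.Quotient.ringHom_ext (Polynomial.ringHom_ext (fun a => ?_) ?_)
      · have h1 : φ (mkq (C a)) = mkq (C (a ^ q)) := by
          rw [hφ, Ideal.Quotient.lift_mk, hΦC]
        have h2 : φ (mkq (C (a^q))) = mkq (C ((a^q) ^ q)) := by
          rw [hφ, Ideal.Quotient.lift_mk, hΦC]
        have hqq : (a ^ q) ^ q = a := by
          rw [← pow_mul, hq, ← pow_add]
          obtain ⟨m, rfl⟩ := hl
          have : (m + m) / 2 = m := by omega
          rw [this, ← hcard]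
          exact FiniteField.pow_card a
        simp only [RingHom.comp_apply, RingHom.id_apply]
        show φ (φ (mkq (C a))) = mkq (C a)
        rw [h1, h2, hqq]
      · have h1 : φ u = u ^ (n-1) := by rw [hφ, hu, Ideal.Quotient.lift_mk, hΦX]
        simp only [RingHom.comp_apply, RingHom.id_apply]
        show φ (φ (mkq X)) = mkq X
        rw [show mkq X = u from rfl, h1, map_pow, h1, ← pow_mul, huinv]
    intro x
    rw [hσφ, hσφ]
    have := congrFun (congrArg (fun h : _ →+* _ => (h : _ → _)) this) x
    simpa using this
  -- σ e is idempotent, orthogonality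
  have hse : σ e * σ e = σ e := by rw [← hσmul, he]
  have hOrth : e * σ e = 0 := by
    rcases hprim (e * σ e) (e * (1 - σ e))
      (by linear_combination (σ e * σ e) * he + e * hse)
      (by linear_combination (1 - σ e) * (1 - σ e) * he + e * hse)
      (by linear_combination (σ e - σ e * σ e) * he - e * hse)
      (by ring) with h | h
    · exact h
    · exfalso
      have h1 : e * σ e = e := by linear_combination -h
      have h2 : σ e = e := by
        calc σ e = σ (e * σ e) := by rw [h1]
        _ = σ e * σ (σ e) := hσmul _ _
        _ = σ e * e := by rw [hσσ]
        _ = e * σ e := mul_comm _ _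
        _ = e := h1
      exact hne h2
  -- span membership helpers
  have hmem_e : ∀ z ∈ Ideal.span {e}, z * e = z := by
    intro z hz; obtain ⟨c, rfl⟩ := Ideal.mem_span_singleton'.mp hz
    rw [mul_assoc, he]
  have hmem_se : ∀ z ∈ Ideal.span {σ e}, z * σ e = z := by
    intro z hz; obtain ⟨c, rfl⟩ := Ideal.mem_span_singleton'.mp hz
    rw [mul_assoc, hse]
  have hmem_se0 : ∀ z ∈ Ideal.span {σ e}, z * e = 0 := by
    intro z hz; obtain ⟨c, rfl⟩ := Ideal.mem_span_singleton'.mp hz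
    rw [mul_assoc, mul_comm (σ e) e, hOrth, mul_zero]
  have hσspan : ∀ z ∈ Ideal.span {e}, σ z ∈ Ideal.span {σ e} := by
    intro z hz; obtain ⟨c, rfl⟩ := Ideal.mem_span_singleton'.mp hz
    rw [hσmul]; exact Ideal.mem_span_singleton'.mpr ⟨σ c, rfl⟩
  have hσspan' : ∀ z ∈ Ideal.span {σ e}, σ z ∈ Ideal.span {e} := by
    intro z hz; obtain ⟨c, rfl⟩ := Ideal.mem_span_singleton'.mp hz
    rw [hσmul, hσσ]; exact Ideal.mem_span_singleton'.mpr ⟨σ c, rfl⟩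
  have key0 : ∀ a ∈ Ideal.span {e}, ∀ b ∈ Ideal.span {σ e}, a * b = 0 := by
    intro a ha b hb
    calc a * b = (a * e) * b := by rw [hmem_e a ha]
    _ = a * (b * e) := by ring
    _ = 0 := by rw [hmem_se0 b hb, mul_zero]
  -- product expansion
  have hsum : ∀ z' ∈ Ideal.span {e}, ∀ z'' ∈ Ideal.span {σ e},
      (z' + z'') * σ (z' + z'') = z' * σ z'' + z'' * σ z' := by
    intro z' hz' z'' hz''
    rw [hσadd]
    have e1 : z' * σ z' = 0 := key0 _ hz' _ (hσspan _ hz')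
    have e2 : z'' * σ z'' = 0 := by
      rw [mul_comm]; exact key0 _ (hσspan' _ hz'') _ hz''
    linear_combination e1 + e2
  have part1 : ∀ z' ∈ Ideal.span {e}, ∀ z'' ∈ Ideal.span {σ e},
      ((z' + z'') * σ (z' + z'') = -(e + σ e) ↔
        (∃ w ∈ Ideal.span {e}, z' * w = e) ∧
        (∃ w ∈ Ideal.span {σ e}, σ z' * w = σ e ∧ z'' = -w)) := by
   intro z' hz' z'' hz''
   constructor
   · intro h
     rw [hsum z' hz' z'' hz''] at h
     have h1 : z' * σ z'' = -e := by
       have hc := congrArg (· * e) h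
       have m1 : (z' * σ z'') * e = z' * σ z'' :=
         hmem_e _ (Ideal.mul_mem_right _ _ hz')
       have m2 : (z'' * σ z') * e = 0 := by
         calc (z'' * σ z') * e = (σ z' * e) * z'' := by ring
         _ = 0 := by rw [hmem_se0 _ (hσspan _ hz'), zero_mul]
       calc z' * σ z'' = (z' * σ z'' + z'' * σ z') * e := by
             rw [add_mul, m1, m2, add_zero]
       _ = -(e + σ e) * e := by rw [h]
       _ = -e := by linear_combination -he - hOrth
     have h2 : σ z' * z'' = -(σ e) := by
       have := congrArg σ h1
       rwa [hσmul, hσσ, hσneg] at this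
     refine ⟨⟨-σ z'', neg_mem (hσspan' _ hz''), by linear_combination -h1⟩,
       ⟨-z'', neg_mem hz'', by linear_combination -h2, (neg_neg z'').symm⟩⟩
   · rintro ⟨⟨w₁, hw₁, hzw₁⟩, ⟨w₂, hw₂, hw₂e, rfl⟩⟩
     rw [hsum z' hz' (-w₂) (neg_mem hw₂)]
     have h1 : z' * σ w₂ = e := by
       have := congrArg σ hw₂e
       rwa [hσmul, hσσ, hσσ] at this
     rw [hσneg]
     linear_combination -h1 - hw₂e
  refine ⟨part1, ?_⟩
  -- finiteness
  have hXn_ne : ((X : F[X]) ^ n - C 1) ≠ 0 := (monic_X_pow_sub_C (1:F) hn0).ne_zero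
  haveI : Module.Finite F (Rlam F n 1) := by
    have pb : PowerBasis F (AdjoinRoot ((X : F[X]) ^ n - C (1:F))) :=
      AdjoinRoot.powerBasis hXn_ne
    exact Module.Finite.of_basis pb.basis
  haveI : Finite (Rlam F n 1) := Module.finite_of_finite F
  -- reducedness
  have hnF : (n : F) ≠ 0 := by
    rw [Ne, CharP.cast_eq_zero_iff F p n]
    intro hdvd
    have h1 : p ∣ Nat.gcd n p := Nat.dvd_gcd hdvd dvd_rfl
    rw [hn] at h1
    exact hp.one_lt.ne' (Nat.dvd_one.mp h1)
  haveI : IsReduced (Rlam F n 1) := by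
    have hsep : ((X : F[X]) ^ n - C (1:F)).Separable :=
      separable_X_pow_sub_C (1:F) hnF one_ne_zero
    have hsq : Squarefree ((X : F[X]) ^ n - C (1:F)) := hsep.squarefree
    exact (Ideal.isRadical_iff_quotient_reduced _).mp
      (isRadical_iff_span_singleton.mp hsq.isRadical)
  -- field property of Re
  have hfield : ∀ x ∈ Ideal.span {e}, x ≠ 0 → ∃ w ∈ Ideal.span {e}, x * w = e := by
    intro x hx hx0
    obtain ⟨m, hm1, hmid⟩ := aux_exists_pow_idem x
    have hxm : x ^ m ∈ Ideal.span {e} := Ideal.pow_mem_of_mem _ hx m (by omega)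
    have hxe : x ^ m * e = x ^ m := hmem_e _ hxm
    rcases hprim (x ^ m) (e - x ^ m) hmid
        (by linear_combination he + hmid - 2 * hxe)
        (by linear_combination hxe - hmid)
        (by ring) with h | h
    · exfalso
      exact hx0 (IsReduced.eq_zero x ⟨m, h⟩)
    · have hxm_e : x ^ m = e := by linear_combination -h
      refine ⟨x ^ (m - 1) * e, Ideal.mul_mem_left _ _ (Ideal.mem_span_singleton_self e), ?_⟩
      calc x * (x ^ (m - 1) * e) = x ^ (m - 1 + 1) * e := by rw [pow_succ]; ring
      _ = x ^ m * e := by rw [show m - 1 + 1 = m by omega]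
      _ = e := by rw [hxm_e, he]
  -- decomposition for elements of span {e + σ e}
  have hdec : ∀ z ∈ Ideal.span {e + σ e}, z = z * e + z * σ e ∧
      z * e ∈ Ideal.span {e} ∧ z * σ e ∈ Ideal.span {σ e} := by
    intro z hz
    obtain ⟨c, rfl⟩ := Ideal.mem_span_singleton'.mp hz
    exact ⟨by linear_combination -c*he - c*hse - 2*c*hOrth,
      Ideal.mem_span_singleton'.mpr ⟨c * (e + σ e), rfl⟩,
      Ideal.mem_span_singleton'.mpr ⟨c * (e + σ e), rfl⟩⟩
  have huniq : ∀ x w w' : Rlam F n 1, w ∈ Ideal.span {e} → w' ∈ Ideal.span {e} →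
      x * w = e → x * w' = e → w = w' := by
    intro x w w' hw hw' h1 h2
    calc w = w * e := (hmem_e w hw).symm
    _ = w * (x * w') := by rw [h2]
    _ = (x * w) * w' := by ring
    _ = e * w' := by rw [h1]
    _ = w' * e := mul_comm _ _
    _ = w' := hmem_e w' hw'
  set S := {z : Rlam F n 1 | z ∈ Ideal.span {e + σ e} ∧ z * σ z = -(e + σ e)} with hSdef
  set T := ((Ideal.span {e} : Ideal (Rlam F n 1)) : Set (Rlam F n 1)) \ {0} with hTdef
  have himg : (fun z => z * e) '' S = T := by
    apply Set.Subset.antisymm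
    · rintro _ ⟨z, ⟨hzm, hzs⟩, rfl⟩
      obtain ⟨hzd, hze, hzse⟩ := hdec z hzm
      have hprod : (z * e + z * σ e) * σ (z * e + z * σ e) = -(e + σ e) := by
        rw [← hzd]; exact hzs
      obtain ⟨⟨w, hw, hzw⟩, -⟩ := (part1 _ hze _ hzse).mp hprod
      refine ⟨hze, ?_⟩
      simp only [Set.mem_singleton_iff]
      intro h0
      rw [h0, zero_mul] at hzw
      exact he0 hzw.symm
    · rintro x ⟨hx, hx0⟩
      simp only [Set.mem_singleton_iff] at hx0
      obtain ⟨w, hw, hxw⟩ := hfield x hx hx0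
      have hsw : σ w ∈ Ideal.span {σ e} := hσspan _ hw
      have h1 : x * e = x := hmem_e _ hx
      have h2 : x * σ e = 0 := key0 _ hx _ (Ideal.mem_span_singleton_self _)
      have h3 : σ w * σ e = σ w := hmem_se _ hsw
      have h4 : σ w * e = 0 := hmem_se0 _ hsw
      refine ⟨x + -(σ w), ⟨?_, ?_⟩, ?_⟩
      · exact Ideal.mem_span_singleton'.mpr
          ⟨x + -(σ w), by linear_combination h1 + h2 - h3 - h4⟩
      · apply (part1 x hx (-(σ w)) (neg_mem hsw)).mpr
        refine ⟨⟨w, hw, hxw⟩, ⟨σ w, hsw, ?_, rfl⟩⟩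
        have := congrArg σ hxw
        rwa [hσmul] at this
      · simp only
        linear_combination h1 - h4
  have hinj : Set.InjOn (fun z => z * e) S := by
    rintro z₁ ⟨hz₁m, hz₁s⟩ z₂ ⟨hz₂m, hz₂s⟩ h
    simp only at h
    obtain ⟨hd₁, he₁, hse₁⟩ := hdec z₁ hz₁m
    obtain ⟨hd₂, he₂, hse₂⟩ := hdec z₂ hz₂m
    obtain ⟨-, ⟨w₁, hw₁, hw₁e, hz₁''⟩⟩ :=
      (part1 _ he₁ _ hse₁).mp (by rw [← hd₁]; exact hz₁s)
    obtain ⟨-, ⟨w₂, hw₂, hw₂e, hz₂''⟩⟩ :=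
      (part1 _ he₂ _ hse₂).mp (by rw [← hd₂]; exact hz₂s)
    have k₁ : (z₁ * e) * σ w₁ = e := by
      have := congrArg σ hw₁e; rwa [hσmul, hσσ, hσσ] at this
    have k₂ : (z₂ * e) * σ w₂ = e := by
      have := congrArg σ hw₂e; rwa [hσmul, hσσ, hσσ] at this
    rw [← h] at k₂
    have hsww : σ w₁ = σ w₂ :=
      huniq (z₁ * e) _ _ (hσspan' _ hw₁) (hσspan' _ hw₂) k₁ k₂
    have hww : w₁ = w₂ := by
      have := congrArg σ hsww; rwa [hσσ, hσσ] at this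
    rw [hd₁, hd₂, h, hz₁'', hz₂'', hww]
  -- cardinalities
  have hSt : S.ncard = T.ncard := by
    rw [← himg, Set.ncard_image_of_injOn hinj]
  have h0mem : (0 : Rlam F n 1) ∈
      ((Ideal.span {e} : Ideal (Rlam F n 1)) : Set (Rlam F n 1)) :=
    (Ideal.span {e}).zero_mem
  have hTcard : T.ncard =
      ((Ideal.span {e} : Ideal (Rlam F n 1)) : Set (Rlam F n 1)).ncard - 1 :=
    Set.ncard_diff_singleton_of_mem h0mem
  have hcardspan : ((Ideal.span {e} : Ideal (Rlam F n 1)) : Set (Rlam F n 1)).ncard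
      = p ^ (Module.finrank F
          (Submodule.restrictScalars F (Ideal.span {e} : Ideal (Rlam F n 1))) * ℓ) := by
    haveI : Fintype (Submodule.restrictScalars F (Ideal.span {e} : Ideal (Rlam F n 1))) :=
      Fintype.ofFinite _
    have hc := Module.card_eq_pow_finrank (K := F)
      (V := Submodule.restrictScalars F (Ideal.span {e} : Ideal (Rlam F n 1)))
    rw [← Nat.card_coe_set_eq]
    have hnatc : Nat.card ((Ideal.span {e} : Ideal (Rlam F n 1)) : Set (Rlam F n 1)) =
        Fintype.card (Submodule.restrictScalars F (Ideal.span {e} : Ideal (Rlam F n 1))) := by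
      rw [← Nat.card_eq_fintype_card]
      exact Nat.card_congr (Equiv.refl _)
    rw [hnatc, hc, hcard, ← pow_mul, mul_comm ℓ]
  rw [hSt, hTcard, hcardspan]
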